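/- arXiv:1311.0423 — 4 statements merged into one kernel-verified Lean document; each statement's English description precedes it below -/
import Mathlib

section
/- Let A ∈ ℝ^{m×n} and k ∈ ℕ. The following are equivalent: (i) for every nonnegative k-sparse vector ū ∈ ℝ^n and every nonnegative u ∈ ℝ^n with Au = Aū one has u = ū (i.e., every k-sparse nonnegative vector is the unique nonnegative solution of its own measurement equations); (ii) every nonzero vector v in the nullspace N(A) has at least k+1 strictly negative entries and at least k+1 strictly positive entries. -/
/-- Every nonnegative `k`-sparse vector is the unique nonnegative solution of its own
measurement equations iff every nonzero nullspace vector of `A` has at least `k+1`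
strictly negative and at least `k+1` strictly positive entries. -/
theorem stmt_0 (m n k : ℕ) (A : Matrix (Fin m) (Fin n) ℝ) :
    (∀ ubar : Fin n → ℝ, (∀ i, 0 ≤ ubar i) →
        (Finset.univ.filter (fun i => ubar i ≠ 0)).card ≤ k →
        ∀ u : Fin n → ℝ, (∀ i, 0 ≤ u i) → A.mulVec u = A.mulVec ubar → u = ubar) ↔
    (∀ v : Fin n → ℝ, A.mulVec v = 0 → v ≠ 0 →
        k + 1 ≤ (Finset.univ.filter (fun i => v i < 0)).card ∧
        k + 1 ≤ (Finset.univ.filter (fun i => 0 < v i)).card) := by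
  constructor
  · intro h v hv hv0
    have key : ∀ w : Fin n → ℝ, A.mulVec w = 0 → w ≠ 0 →
        ¬ (Finset.univ.filter (fun i => w i < 0)).card ≤ k := by
      intro w hw hw0 hcard
      set ubar : Fin n → ℝ := fun i => max (-w i) 0 with hub
      set u : Fin n → ℝ := fun i => max (w i) 0 with hu
      have hdiff : ∀ i, u i - ubar i = w i := by
        intro i
        simp only [hu, hub]
        rcases le_total (w i) 0 with hle | hle
        · rw [max_eq_right hle, max_eq_left (by linarith)]; ring
        · rw [max_eq_left hle, max_eq_right (by linarith)]; ring
      have hsupp : (Finset.univ.filter (fun i => ubar i ≠ 0)).card ≤ k := by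
        refine le_trans (Finset.card_le_card ?_) hcard
        intro i hi
        simp only [Finset.mem_filter, Finset.mem_univ, true_and] at *
        by_contra hneg
        push_neg at hneg
        exact hi (max_eq_right (by linarith))
      have hmv : A.mulVec u = A.mulVec ubar := by
        have huw : u = ubar + w := by
          funext i; have := hdiff i; simp only [Pi.add_apply]; linarith
        rw [huw, Matrix.mulVec_add, hw, add_zero]
      have heq := h ubar (fun i => le_max_right _ _) hsupp u (fun i => le_max_right _ _) hmv
      apply hw0
      funext i
      have h1 : u i = ubar i := congrFun heq i
      have h2 := hdiff i
      simp only [Pi.zero_apply]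
      linarith
    constructor
    · have := key v hv hv0
      omega
    · have hneg : A.mulVec (-v) = 0 := by rw [Matrix.mulVec_neg, hv, neg_zero]
      have hneg0 : (-v : Fin n → ℝ) ≠ 0 := by
        intro hc; apply hv0; funext i
        have := congrFun hc i; simp only [Pi.neg_apply, Pi.zero_apply, neg_eq_zero] at this
        simp [this]
      have hk := key (-v) hneg hneg0
      have heq : (Finset.univ.filter (fun i => (-v) i < 0)) =
          (Finset.univ.filter (fun i => 0 < v i)) := by
        apply Finset.filter_congr; intro i _; simp
      rw [heq] at hk
      omega
  · intro h ubar hub hcard u hu hmv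
    by_contra hne
    set v : Fin n → ℝ := fun i => u i - ubar i with hv
    have hv0 : v ≠ 0 := by
      intro hc; apply hne; funext i
      have := congrFun hc i; simp only [hv, Pi.zero_apply] at this; linarith
    have hvnull : A.mulVec v = 0 := by
      have hveq : v = u - ubar := rfl
      rw [hveq, Matrix.mulVec_sub, hmv, sub_self]
    have hk := (h v hvnull hv0).1
    have hsub : (Finset.univ.filter (fun i => v i < 0)) ⊆
        (Finset.univ.filter (fun i => ubar i ≠ 0)) := by
      intro i hi
      simp only [Finset.mem_filter, Finset.mem_univ, true_and, hv] at *
      have := hu i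
      intro hc; rw [hc] at hi; linarith
    have := Finset.card_le_card hsub
    omega
end

section
/- Let A ∈ ℝ^{m×n} and B ∈ ℝ^{p×n} be measurement and analysis operators such that the rows of the stacked matrix (A; B) ∈ ℝ^{(m+p)×n} are linearly independent, and let ℓ ∈ ℕ with ℓ ≤ p. Then the following are equivalent: (i) κ_B(ℓ) ≤ m; (ii) for every Λ ⊆ [p] with |Λ| ≥ ℓ and all u₁, u₂ ∈ W_Λ with Au₁ = Au₂, one has u₁ = u₂ (i.e., every ℓ-cosparse vector with known cosupport Λ is uniquely recoverable from its measurements b = Au). -/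
/-- `W_Λ`: the nullspace of the row submatrix `B_Λ` of the analysis operator `B`. -/
noncomputable def Wspace {n p : ℕ} (B : Matrix (Fin p) (Fin n) ℝ) (Λ : Finset (Fin p)) :
    Submodule ℝ (Fin n → ℝ) :=
  ⨅ r ∈ Λ, LinearMap.ker ((LinearMap.proj r : (Fin p → ℝ) →ₗ[ℝ] ℝ) ∘ₗ B.mulVecLin)

/-- `κ_B(ℓ) = max{dim W_Λ : Λ ⊆ [p], |Λ| ≥ ℓ}`. -/
noncomputable def kappa {n p : ℕ} (B : Matrix (Fin p) (Fin n) ℝ) (ℓ : ℕ) : ℕ :=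
  (Finset.univ.filter (fun Λ : Finset (Fin p) => ℓ ≤ Λ.card)).sup
    (fun Λ => Module.finrank ℝ (Wspace B Λ))

lemma ker_rank_of_li {n : ℕ} {ι : Type*} [Fintype ι] (M : Matrix ι (Fin n) ℝ)
    (h : LinearIndependent ℝ M) :
    Module.finrank ℝ (LinearMap.ker M.mulVecLin) + Fintype.card ι = n := by
  have hinj : Function.Injective (Matrix.transpose M).mulVecLin := by
    rw [Matrix.coe_mulVecLin, Matrix.mulVec_injective_iff]
    exact h
  have h1 : M.rank = Fintype.card ι := by
    rw [← Matrix.rank_transpose, Matrix.rank, LinearMap.finrank_range_of_inj hinj,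
      Module.finrank_fintype_fun_eq_card]
  have h2 := LinearMap.finrank_range_add_finrank_ker M.mulVecLin
  rw [Module.finrank_fintype_fun_eq_card, Fintype.card_fin] at h2
  rw [Matrix.rank] at h1
  omega

lemma mem_Wspace {n p : ℕ} (B : Matrix (Fin p) (Fin n) ℝ) (Λ : Finset (Fin p))
    (u : Fin n → ℝ) : u ∈ Wspace B Λ ↔ ∀ r ∈ Λ, B.mulVec u r = 0 := by
  simp [Wspace, Submodule.mem_iInf, LinearMap.mem_ker]

section main
variable {m n p : ℕ} (A : Matrix (Fin m) (Fin n) ℝ) (B : Matrix (Fin p) (Fin n) ℝ)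
  (Λ : Finset (Fin p))

noncomputable def Dmat : Matrix {x // x ∈ Λ} (Fin n) ℝ := Matrix.of fun j => B j.1

noncomputable def Cmat : Matrix (Fin m ⊕ {x // x ∈ Λ}) (Fin n) ℝ :=
  Matrix.of (Sum.elim (fun i => A i) (fun j => B j.1))

lemma Wspace_eq_ker : Wspace B Λ = LinearMap.ker (Dmat B Λ).mulVecLin := by
  ext u
  rw [mem_Wspace, LinearMap.mem_ker]
  constructor
  · intro h
    funext j
    exact h j.1 j.2
  · intro h r hr
    exact congrFun h ⟨r, hr⟩

lemma ker_Cmat (u : Fin n → ℝ) :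
    u ∈ LinearMap.ker (Cmat A B Λ).mulVecLin ↔ A.mulVec u = 0 ∧ u ∈ Wspace B Λ := by
  rw [LinearMap.mem_ker, mem_Wspace]
  constructor
  · intro h
    refine ⟨funext fun i => congrFun h (Sum.inl i), fun r hr => congrFun h (Sum.inr ⟨r, hr⟩)⟩
  · rintro ⟨h1, h2⟩
    funext x
    cases x with
    | inl i => exact congrFun h1 i
    | inr j => exact h2 j.1 j.2

lemma li_Dmat (hli : LinearIndependent ℝ (Sum.elim (fun i : Fin m => A i) (fun j : Fin p => B j))) :
    LinearIndependent ℝ (Dmat B Λ) := by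
  have := hli.comp (fun j : {x // x ∈ Λ} => Sum.inr j.1 : {x // x ∈ Λ} → Fin m ⊕ Fin p)
    (fun a b hab => Subtype.ext (Sum.inr_injective hab))
  exact this

lemma li_Cmat (hli : LinearIndependent ℝ (Sum.elim (fun i : Fin m => A i) (fun j : Fin p => B j))) :
    LinearIndependent ℝ (Cmat A B Λ) := by
  have hinj : Function.Injective (Sum.map id (Subtype.val : {x // x ∈ Λ} → Fin p)) :=
    Function.Injective.sumMap (Function.injective_id (α := Fin m)) Subtype.val_injective
  have := hli.comp _ hinj
  have heq : (Sum.elim (fun i : Fin m => A i) (fun j : Fin p => B j)) ∘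
      (Sum.map id (Subtype.val : {x // x ∈ Λ} → Fin p)) = Cmat A B Λ := by
    funext x
    cases x <;> rfl
  rwa [heq] at this

end main


/-- Uniqueness with known cosupport: if the rows of the stacked matrix `(A; B)` are
linearly independent, then `κ_B(ℓ) ≤ m` is necessary and sufficient for recovery of every
`ℓ`-cosparse vector with known cosupport from its measurements. -/
theorem stmt_3 (m n p ℓ : ℕ) (hℓ : ℓ ≤ p)
    (A : Matrix (Fin m) (Fin n) ℝ) (B : Matrix (Fin p) (Fin n) ℝ)
    (hli : LinearIndependent ℝ (Sum.elim (fun i : Fin m => A i) (fun j : Fin p => B j))) :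
    kappa B ℓ ≤ m ↔
      ∀ Λ : Finset (Fin p), ℓ ≤ Λ.card →
        ∀ u₁ u₂ : Fin n → ℝ, u₁ ∈ Wspace B Λ → u₂ ∈ Wspace B Λ →
          A.mulVec u₁ = A.mulVec u₂ → u₁ = u₂ := by
  have cardC : ∀ Λ : Finset (Fin p), Fintype.card (Fin m ⊕ {x // x ∈ Λ}) = m + Λ.card := by
    intro Λ; simp
  have hC := fun Λ : Finset (Fin p) => ker_rank_of_li _ (li_Cmat A B Λ hli)
  have hD := fun Λ : Finset (Fin p) => ker_rank_of_li _ (li_Dmat A B Λ hli)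
  simp only [cardC, Fintype.card_coe] at hC hD
  constructor
  · intro hk Λ hΛ u₁ u₂ h1 h2 hA
    have hfin : Module.finrank ℝ (Wspace B Λ) ≤ m := by
      refine le_trans ?_ hk
      unfold kappa
      exact Finset.le_sup (f := fun Λ => Module.finrank ℝ (Wspace B Λ)) (by simp [hΛ])
    rw [Wspace_eq_ker] at hfin
    have h0 : Module.finrank ℝ (LinearMap.ker (Cmat A B Λ).mulVecLin) = 0 := by
      have := hC Λ; have := hD Λ; omega
    have hbot : LinearMap.ker (Cmat A B Λ).mulVecLin = ⊥ :=
      Submodule.finrank_eq_zero.mp h0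
    have hmem : u₁ - u₂ ∈ LinearMap.ker (Cmat A B Λ).mulVecLin := by
      rw [ker_Cmat]
      refine ⟨?_, Submodule.sub_mem _ h1 h2⟩
      rw [Matrix.mulVec_sub, hA, sub_self]
    rw [hbot, Submodule.mem_bot, sub_eq_zero] at hmem
    exact hmem
  · intro hrec
    apply Finset.sup_le
    intro Λ hΛ
    rw [Finset.mem_filter] at hΛ
    have hbot : LinearMap.ker (Cmat A B Λ).mulVecLin = ⊥ := by
      rw [eq_bot_iff]
      intro u hu
      rw [ker_Cmat] at hu
      have := hrec Λ hΛ.2 u 0 hu.2 (Submodule.zero_mem _)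
        (by rw [hu.1, Matrix.mulVec_zero])
      simp [this]
    have h0 : Module.finrank ℝ (LinearMap.ker (Cmat A B Λ).mulVecLin) = 0 := by
      rw [hbot]; simp
    rw [Wspace_eq_ker]
    have := hC Λ; have := hD Λ; omega
end

section
/- Let A ∈ ℝ^{m×n} and B ∈ ℝ^{p×n} be measurement and analysis operators such that the rows of the stacked matrix (A; B) ∈ ℝ^{(m+p)×n} are linearly independent, and let ℓ ∈ ℕ with ℓ ≤ p. Suppose that every ℓ-cosparse solution of its measurement equations is unique, i.e., whenever u₁, u₂ ∈ ℝ^n both have cosparsity at least ℓ with respect to B and Au₁ = Au₂, then u₁ = u₂. Then κ̃_B(ℓ) ≤ m, where κ̃_B(ℓ) := max{dim(W_{Λ₁} + W_{Λ₂}) : Λ₁, Λ₂ ⊆ [p], |Λ₁| ≥ ℓ, |Λ₂| ≥ ℓ}. -/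
/-- `κ̃_B(ℓ) = max{dim(W_{Λ₁} + W_{Λ₂}) : Λ₁, Λ₂ ⊆ [p], |Λ₁| ≥ ℓ, |Λ₂| ≥ ℓ}`. -/
noncomputable def kappaTilde {n p : ℕ} (B : Matrix (Fin p) (Fin n) ℝ) (ℓ : ℕ) : ℕ :=
  ((Finset.univ.filter (fun Λ : Finset (Fin p) => ℓ ≤ Λ.card)) ×ˢ
      (Finset.univ.filter (fun Λ : Finset (Fin p) => ℓ ≤ Λ.card))).sup
    (fun ΛΛ => Module.finrank ℝ ↥(Wspace B ΛΛ.1 ⊔ Wspace B ΛΛ.2))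

lemma wspace_card_le {n p : ℕ} (B : Matrix (Fin p) (Fin n) ℝ) (Λ : Finset (Fin p))
    (w : Fin n → ℝ) (hw : w ∈ Wspace B Λ) :
    Λ.card ≤ (Finset.univ.filter (fun r => B.mulVec w r = 0)).card := by
  apply Finset.card_le_card
  intro r hr
  have h1 := (Submodule.mem_iInf _).mp hw r
  have h2 := (Submodule.mem_iInf _).mp h1 hr
  simp only [LinearMap.mem_ker, LinearMap.comp_apply, Matrix.mulVecLin_apply,
    LinearMap.proj_apply] at h2
  simp [h2]

/-- Necessary condition for uniqueness with unknown cosupport: if every `ℓ`-cosparse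
solution of its measurement equations is unique, then `κ̃_B(ℓ) ≤ m`. -/
theorem stmt_4 (m n p ℓ : ℕ) (hℓ : ℓ ≤ p)
    (A : Matrix (Fin m) (Fin n) ℝ) (B : Matrix (Fin p) (Fin n) ℝ)
    (hli : LinearIndependent ℝ (Sum.elim (fun i : Fin m => A i) (fun j : Fin p => B j)))
    (huniq : ∀ u₁ u₂ : Fin n → ℝ,
      ℓ ≤ (Finset.univ.filter (fun r => B.mulVec u₁ r = 0)).card →
      ℓ ≤ (Finset.univ.filter (fun r => B.mulVec u₂ r = 0)).card →
      A.mulVec u₁ = A.mulVec u₂ → u₁ = u₂) :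
    kappaTilde B ℓ ≤ m := by
  apply Finset.sup_le
  rintro ⟨Λ₁, Λ₂⟩ hmem
  simp only [Finset.mem_product, Finset.mem_filter, Finset.mem_univ, true_and] at hmem
  obtain ⟨h₁, h₂⟩ := hmem
  set V := Wspace B Λ₁ ⊔ Wspace B Λ₂ with hV
  have hinj : Function.Injective (A.mulVecLin.comp V.subtype) := by
    rw [← LinearMap.ker_eq_bot, LinearMap.ker_eq_bot']
    intro v hv
    obtain ⟨w₁, hw₁, w₂, hw₂, hsum⟩ := Submodule.mem_sup.mp v.2
    have hA0 : A.mulVec (↑v : Fin n → ℝ) = 0 := hv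
    have hAeq : A.mulVec w₁ = A.mulVec (-w₂) := by
      have : A.mulVec w₁ + A.mulVec w₂ = 0 := by
        rw [← Matrix.mulVec_add, hsum, hA0]
      rw [Matrix.mulVec_neg]
      exact eq_neg_of_add_eq_zero_left this
    have heq : w₁ = -w₂ := huniq w₁ (-w₂)
      (le_trans h₁ (wspace_card_le B Λ₁ w₁ hw₁))
      (le_trans h₂ (wspace_card_le B Λ₂ (-w₂) (neg_mem hw₂))) hAeq
    have : (↑v : Fin n → ℝ) = 0 := by rw [← hsum, heq]; ring
    exact Subtype.ext this
  have := LinearMap.finrank_le_finrank_of_injective hinj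
  simpa using this
end

section
/- Let q ≥ 3 and d ≥ 2 be integers and let S be a nonempty subset of the grid {0,…,q−1}^d with s = |S|. Then |Int_e(S)| ≤ max{ d·s·(1 − s^{−1/d}), d·q^d·(1 − 1/q)·(1 − (1 − s/q^d)^{1−1/d}) }, where the powers are real powers. -/
open Finset Function in
lemma holder_prod {τ ι : Type*} (s : Finset τ) (t : Finset ι)
    (w : ι → ℝ) (f : ι → τ → ℝ) (hw : ∀ j ∈ t, 0 < w j) (hw1 : ∑ j ∈ t, w j = 1)
    (hf : ∀ j ∈ t, ∀ x ∈ s, 0 ≤ f j x) :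
    ∑ x ∈ s, ∏ j ∈ t, f j x ^ w j ≤ ∏ j ∈ t, (∑ x ∈ s, f j x) ^ w j := by
  by_cases h : ∀ j ∈ t, 0 < ∑ x ∈ s, f j x
  · have key : ∀ x ∈ s, ∏ j ∈ t, f j x ^ w j ≤
        (∏ j ∈ t, (∑ y ∈ s, f j y) ^ w j) * ∑ j ∈ t, w j * (f j x / ∑ y ∈ s, f j y) := by
      intro x hx
      have e1 : ∏ j ∈ t, f j x ^ w j
          = (∏ j ∈ t, (∑ y ∈ s, f j y) ^ w j) * ∏ j ∈ t, (f j x / ∑ y ∈ s, f j y) ^ w j := by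
        rw [← Finset.prod_mul_distrib]
        refine Finset.prod_congr rfl fun j hj => ?_
        rw [← Real.mul_rpow (le_of_lt (h j hj)) (div_nonneg (hf j hj x hx) (le_of_lt (h j hj)))]
        rw [mul_div_cancel₀ _ (ne_of_gt (h j hj))]
      rw [e1]
      refine mul_le_mul_of_nonneg_left ?_ (Finset.prod_nonneg fun j hj =>
        Real.rpow_nonneg (le_of_lt (h j hj)) _)
      exact Real.geom_mean_le_arith_mean_weighted t w _ (fun j hj => le_of_lt (hw j hj)) hw1
        (fun j hj => div_nonneg (hf j hj x hx) (le_of_lt (h j hj)))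
    calc ∑ x ∈ s, ∏ j ∈ t, f j x ^ w j
        ≤ ∑ x ∈ s, (∏ j ∈ t, (∑ y ∈ s, f j y) ^ w j) * ∑ j ∈ t, w j * (f j x / ∑ y ∈ s, f j y) :=
          Finset.sum_le_sum key
      _ = (∏ j ∈ t, (∑ y ∈ s, f j y) ^ w j) * ∑ j ∈ t, w j * ((∑ x ∈ s, f j x) / ∑ y ∈ s, f j y) := by
          rw [← Finset.mul_sum, Finset.sum_comm]
          congr 1
          refine Finset.sum_congr rfl fun j hj => ?_
          rw [← Finset.mul_sum, ← Finset.sum_div]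
      _ = ∏ j ∈ t, (∑ y ∈ s, f j y) ^ w j := by
          have : ∑ j ∈ t, w j * ((∑ x ∈ s, f j x) / ∑ y ∈ s, f j y) = 1 := by
            rw [← hw1]
            refine Finset.sum_congr rfl fun j hj => ?_
            rw [div_self (ne_of_gt (h j hj)), mul_one]
          rw [this, mul_one]
  · push_neg at h
    obtain ⟨j0, hj0, hle⟩ := h
    have hsum0 : ∑ x ∈ s, f j0 x = 0 :=
      le_antisymm hle (Finset.sum_nonneg fun x hx => hf j0 hj0 x hx)
    have hzero : ∀ x ∈ s, f j0 x = 0 := by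
      intro x hx
      exact (Finset.sum_eq_zero_iff_of_nonneg (fun y hy => hf j0 hj0 y hy)).1 hsum0 x hx
    have : ∑ x ∈ s, ∏ j ∈ t, f j x ^ w j = 0 := by
      refine Finset.sum_eq_zero fun x hx => ?_
      refine Finset.prod_eq_zero hj0 ?_
      rw [hzero x hx, Real.zero_rpow (ne_of_gt (hw j0 hj0))]
    rw [this]
    exact Finset.prod_nonneg fun j hj =>
      Real.rpow_nonneg (Finset.sum_nonneg fun x hx => hf j hj x hx) _

open Finset Function

lemma injOn_update_const {ι α : Type*} [DecidableEq ι] (i : ι) (z c : α)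
    (M : Finset (ι → α)) (hM : ∀ a ∈ M, a i = c) :
    Set.InjOn (fun a => update a i z) (M : Set (ι → α)) := by
  intro a ha b hb hab
  funext j
  by_cases hj : j = i
  · subst hj; rw [hM a ha, hM b hb]
  · have := congrFun hab j
    simpa [update, hj] using this

lemma LW_aux {ι α : Type*} [DecidableEq ι] [DecidableEq (ι → α)] (z : α)
    (u : Finset ι) :
    ∀ S : Finset (ι → α), S.Nonempty → (∀ a ∈ S, ∀ j, j ∉ u → a j = z) →
    (S.card : ℝ) ^ (u.card - 1 : ℕ) ≤
      ∏ j ∈ u, (((S.image fun a => update a j z).card : ℝ)) := by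
  classical
  induction u using Finset.induction_on with
  | empty => intro S _ _; simp
  | @insert i₀ u hi₀ IH =>
    intro S hSne hsupp
    set T : Finset α := S.image (fun a => a i₀) with hT
    set St : α → Finset (ι → α) := fun t => S.filter (fun a => a i₀ = t) with hSt
    -- each fiber nonempty for t ∈ T
    have hStne : ∀ t ∈ T, (St t).Nonempty := by
      intro t ht
      obtain ⟨a, ha, rfl⟩ := Finset.mem_image.1 ht
      exact ⟨a, Finset.mem_filter.2 ⟨ha, rfl⟩⟩
    have hStconst : ∀ t, ∀ a ∈ St t, a i₀ = t := fun t a ha => (Finset.mem_filter.1 ha).2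
    -- card decomposition
    have hcard : S.card = ∑ t ∈ T, (St t).card :=
      Finset.card_eq_sum_card_fiberwise (fun a ha => Finset.mem_image_of_mem _ ha)
    -- L values
    set L : ι → ℕ := fun j => (S.image fun a => update a j z).card with hL
    set m : α → ι → ℕ := fun t j => ((St t).image fun a => update a j z).card with hm
    -- (1) fiber card ≤ L i₀
    have h1 : ∀ t ∈ T, (St t).card ≤ L i₀ := by
      intro t ht
      have hinj := injOn_update_const i₀ z t (St t) (hStconst t)
      calc (St t).card = ((St t).image fun a => update a i₀ z).card :=
            (Finset.card_image_of_injOn hinj).symm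
        _ ≤ L i₀ := Finset.card_le_card (Finset.image_subset_image (Finset.filter_subset _ _))
    -- (2) IH for fibers: (St t).card ^ (u.card - 1) ≤ ∏ j ∈ u, m t j
    have h2 : ∀ t ∈ T, ((St t).card : ℝ) ^ (u.card - 1 : ℕ) ≤ ∏ j ∈ u, (m t j : ℝ) := by
      intro t ht
      set St' : Finset (ι → α) := (St t).image (fun a => update a i₀ z) with hSt'
      have hinj := injOn_update_const i₀ z t (St t) (hStconst t)
      have hcard' : St'.card = (St t).card := Finset.card_image_of_injOn hinj
      have hne' : St'.Nonempty := (hStne t ht).image _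
      have hsupp' : ∀ a ∈ St', ∀ j, j ∉ u → a j = z := by
        intro a ha j hj
        obtain ⟨b, hb, rfl⟩ := Finset.mem_image.1 ha
        by_cases hji : j = i₀
        · subst hji; simp [update]
        · rw [update_of_ne hji]
          exact hsupp b (Finset.mem_filter.1 hb).1 j (by simp [hji, hj])
      have := IH St' hne' hsupp'
      rw [hcard'] at this
      refine this.trans (le_of_eq ?_)
      refine Finset.prod_congr rfl fun j hj => ?_
      congr 1
      -- (St'.image (update · j z)).card = m t j
      have hji : j ≠ i₀ := fun h => hi₀ (h ▸ hj)
      have e1 : St'.image (fun a => update a j z)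
          = ((St t).image fun a => update a j z).image (fun a => update a i₀ z) := by
        rw [hSt', Finset.image_image, Finset.image_image]
        refine Finset.image_congr fun a _ => ?_
        simp only [comp_apply]
        exact update_comm hji.symm z z a
      have hconst2 : ∀ a ∈ (St t).image fun a => update a j z, a i₀ = t := by
        intro a ha
        obtain ⟨b, hb, rfl⟩ := Finset.mem_image.1 ha
        rw [update_of_ne (Ne.symm hji)]
        exact hStconst t b hb
      rw [e1, Finset.card_image_of_injOn (injOn_update_const i₀ z t _ hconst2)]
    -- (3) ∑ t ∈ T, m t j = L j for j ∈ u
    have h3 : ∀ j ∈ u, ∑ t ∈ T, m t j = L j := by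
      intro j hj
      have hji : j ≠ i₀ := fun h => hi₀ (h ▸ hj)
      have : (S.image fun a => update a j z).card
          = ∑ t ∈ T, ((S.image fun a => update a j z).filter fun b => b i₀ = t).card := by
        refine Finset.card_eq_sum_card_fiberwise ?_
        intro b hb
        obtain ⟨a, ha, rfl⟩ := Finset.mem_image.1 hb
        beta_reduce
        rw [update_of_ne (Ne.symm hji)]
        exact Finset.mem_image_of_mem _ ha
      show ∑ t ∈ T, m t j = (S.image fun a => update a j z).card
      rw [this]
      refine (Finset.sum_congr rfl fun t ht => ?_).symm
      congr 1
      ext b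
      constructor
      · intro hb
        obtain ⟨hb1, hb2⟩ := Finset.mem_filter.1 hb
        obtain ⟨a, ha, rfl⟩ := Finset.mem_image.1 hb1
        rw [update_of_ne (Ne.symm hji)] at hb2
        exact Finset.mem_image_of_mem _ (Finset.mem_filter.2 ⟨ha, hb2⟩)
      · intro hb
        obtain ⟨a, ha, rfl⟩ := Finset.mem_image.1 hb
        have ha' := Finset.mem_filter.1 ha
        refine Finset.mem_filter.2 ⟨Finset.mem_image_of_mem _ ha'.1, ?_⟩
        rw [update_of_ne (Ne.symm hji)]; exact ha'.2
    -- numeric part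
    rcases Nat.eq_zero_or_pos u.card with hn | hn
    · have hu : u = ∅ := Finset.card_eq_zero.1 hn
      subst hu
      simp only [Finset.insert_empty, Finset.card_singleton, Nat.sub_self, pow_zero,
        Finset.prod_singleton]
      have : 1 ≤ (S.image fun a => update a i₀ z).card := Finset.card_pos.2 (hSne.image _)
      exact_mod_cast this
    · rw [Finset.card_insert_of_notMem hi₀, Nat.add_sub_cancel, Finset.prod_insert hi₀]
      set n := u.card with hn'
      have hn0 : (n : ℝ) ≠ 0 := Nat.cast_ne_zero.2 hn.ne'
      set X : ℝ := (L i₀ : ℝ) * ∏ j ∈ u, (L j : ℝ) with hX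
      have hX0 : 0 ≤ X := mul_nonneg (Nat.cast_nonneg _)
        (Finset.prod_nonneg fun j _ => Nat.cast_nonneg _)
      have key : (S.card : ℝ) ≤ X ^ (1 / (n : ℝ)) := by
        have step1 : ∀ t ∈ T, ((St t).card : ℝ) ≤
            ((L i₀ : ℝ) * ∏ j ∈ u, (m t j : ℝ)) ^ (1 / (n : ℝ)) := by
          intro t ht
          have hp : ((St t).card : ℝ) ^ n ≤ (L i₀ : ℝ) * ∏ j ∈ u, (m t j : ℝ) := by
            have e : ((St t).card : ℝ) ^ n = ((St t).card : ℝ) * ((St t).card : ℝ) ^ (n - 1) := by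
              conv_lhs => rw [show n = 1 + (n - 1) from (Nat.add_sub_cancel' hn).symm]
              rw [pow_add, pow_one]
            rw [e]
            exact mul_le_mul (by exact_mod_cast h1 t ht) (h2 t ht)
              (pow_nonneg (Nat.cast_nonneg _) _) (Nat.cast_nonneg _)
          calc ((St t).card : ℝ) = ((((St t).card : ℝ)) ^ n) ^ (1 / (n : ℝ)) := by
                rw [← Real.rpow_natCast (((St t).card : ℝ)) n, ← Real.rpow_mul (Nat.cast_nonneg _),
                  mul_one_div, div_self hn0, Real.rpow_one]
            _ ≤ ((L i₀ : ℝ) * ∏ j ∈ u, (m t j : ℝ)) ^ (1 / (n : ℝ)) := by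
                apply Real.rpow_le_rpow (pow_nonneg (Nat.cast_nonneg _) _) hp
                positivity
        calc (S.card : ℝ) = ∑ t ∈ T, ((St t).card : ℝ) := by exact_mod_cast hcard
          _ ≤ ∑ t ∈ T, ((L i₀ : ℝ) * ∏ j ∈ u, (m t j : ℝ)) ^ (1 / (n : ℝ)) :=
              Finset.sum_le_sum step1
          _ = (L i₀ : ℝ) ^ (1 / (n : ℝ)) * ∑ t ∈ T, ∏ j ∈ u, ((m t j : ℝ)) ^ (1 / (n : ℝ)) := by
              rw [Finset.mul_sum]
              refine Finset.sum_congr rfl fun t ht => ?_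
              rw [Real.mul_rpow (Nat.cast_nonneg _)
                (Finset.prod_nonneg fun j _ => Nat.cast_nonneg _),
                ← Real.finset_prod_rpow u _ (fun j _ => Nat.cast_nonneg _)]
          _ ≤ (L i₀ : ℝ) ^ (1 / (n : ℝ)) * ∏ j ∈ u, (∑ t ∈ T, (m t j : ℝ)) ^ (1 / (n : ℝ)) := by
              refine mul_le_mul_of_nonneg_left ?_ (Real.rpow_nonneg (Nat.cast_nonneg _) _)
              exact holder_prod T u (fun _ => 1 / (n : ℝ)) (fun j t => (m t j : ℝ))
                (fun j _ => by positivity)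
                (by rw [Finset.sum_const, ← hn', nsmul_eq_mul, mul_one_div, div_self hn0])
                (fun j _ t _ => Nat.cast_nonneg _)
          _ = X ^ (1 / (n : ℝ)) := by
              rw [hX, Real.mul_rpow (Nat.cast_nonneg _)
                (Finset.prod_nonneg fun j _ => Nat.cast_nonneg _),
                ← Real.finset_prod_rpow u _ (fun j _ => Nat.cast_nonneg _)]
              congr 1
              refine Finset.prod_congr rfl fun j hj => ?_
              rw [← h3 j hj]
              push_cast
              rfl
      calc (S.card : ℝ) ^ n ≤ (X ^ (1 / (n : ℝ))) ^ n :=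
            pow_le_pow_left₀ (Nat.cast_nonneg _) key n
        _ = X := by
            rw [← Real.rpow_natCast (X ^ (1 / (n : ℝ))) n, ← Real.rpow_mul hX0,
              one_div_mul_cancel hn0, Real.rpow_one]

open Finset Function

open scoped Classical in
noncomputable def Ei (q d : ℕ) (S : Finset (Fin d → Fin q)) (i : Fin d) :
    Finset (Fin d → Fin q) :=
  S.filter (fun a => ∃ b ∈ S, (∀ j, j ≠ i → b j = a j) ∧ (b i : ℕ) = (a i : ℕ) + 1)

open scoped Classical in
/-- The edge interior of `S ⊆ {0,…,q−1}^d`: the set of grid edges (unordered pairs of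
grid points at ℓ1-distance 1) with both endpoints in `S`. -/
noncomputable def intE (q d : ℕ) (S : Finset (Fin d → Fin q)) :
    Finset (Sym2 (Fin d → Fin q)) :=
  Finset.univ.filter (fun e => ∃ a b : Fin d → Fin q, e = s(a, b) ∧ a ∈ S ∧ b ∈ S ∧
    (∑ i, |(a i : ℤ) - (b i : ℤ)|) = 1)

lemma claimA (q d : ℕ) (hq : 3 ≤ q) (S : Finset (Fin d → Fin q)) :
    (intE q d S).card ≤ ∑ i : Fin d, (Ei q d S i).card := by
  classical
  have hq0 : 0 < q := by omega
  set F : Fin d → (Fin d → Fin q) → Sym2 (Fin d → Fin q) :=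
    fun i a => s(a, Function.update a i (⟨((a i : ℕ) + 1) % q, Nat.mod_lt _ hq0⟩ : Fin q))
    with hF
  have hsub : intE q d S ⊆ Finset.univ.biUnion (fun i => (Ei q d S i).image (F i)) := by
    intro e he
    simp only [intE, Finset.mem_filter, Finset.mem_univ, true_and] at he
    obtain ⟨a, b, rfl, ha, hb, hsum⟩ := he
    -- find the unique differing coordinate
    set f : Fin d → ℤ := fun j => |(a j : ℤ) - (b j : ℤ)| with hf
    have hf0 : ∀ j, 0 ≤ f j := fun j => abs_nonneg _
    have hex : ∃ i, f i ≠ 0 := by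
      by_contra h
      push_neg at h
      rw [Finset.sum_eq_zero (fun j _ => h j)] at hsum
      norm_num at hsum
    obtain ⟨i, hi⟩ := hex
    have hfi1 : f i = 1 ∧ ∀ j, j ≠ i → f j = 0 := by
      have hsplit : f i + ∑ j ∈ Finset.univ.erase i, f j = 1 := by
        rw [← hsum, ← Finset.add_sum_erase _ f (Finset.mem_univ i)]
      have hrest : 0 ≤ ∑ j ∈ Finset.univ.erase i, f j :=
        Finset.sum_nonneg fun j _ => hf0 j
      have hfige : 1 ≤ f i := by
        rcases (hf0 i).lt_or_eq with h | h
        · omega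
        · exact absurd h.symm hi
      have hfieq : f i = 1 := by omega
      have hrest0 : ∑ j ∈ Finset.univ.erase i, f j = 0 := by omega
      refine ⟨hfieq, fun j hj => ?_⟩
      have := (Finset.sum_eq_zero_iff_of_nonneg (fun j _ => hf0 j)).1 hrest0 j
        (Finset.mem_erase.2 ⟨hj, Finset.mem_univ j⟩)
      exact this
    have hagree : ∀ j, j ≠ i → a j = b j := by
      intro j hj
      have := hfi1.2 j hj
      rw [hf] at this
      simp only [abs_eq_zero, sub_eq_zero] at this
      exact Fin.ext (by exact_mod_cast this)
    -- two cases: b i = a i + 1 or a i = b i + 1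
    have habs : (b i : ℕ) = (a i : ℕ) + 1 ∨ (a i : ℕ) = (b i : ℕ) + 1 := by
      have := hfi1.1
      rw [hf, abs_eq (by norm_num : (0:ℤ) ≤ 1)] at this
      rcases this with h | h
      · right; omega
      · left; omega
    have key : ∀ (x y : Fin d → Fin q), x ∈ S → y ∈ S → (∀ j, j ≠ i → y j = x j) →
        (y i : ℕ) = (x i : ℕ) + 1 → s(x, y) ∈ (Ei q d S i).image (F i) := by
      intro x y hx hy hagr hsucc
      have hxE : x ∈ Ei q d S i := by
        rw [Ei, Finset.mem_filter]
        exact ⟨hx, y, hy, hagr, hsucc⟩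
      refine Finset.mem_image.2 ⟨x, hxE, ?_⟩
      have hyu : Function.update x i (⟨((x i : ℕ) + 1) % q, Nat.mod_lt _ hq0⟩ : Fin q) = y := by
        funext j
        by_cases hj : j = i
        · subst hj
          rw [Function.update_self]
          have hlt : (x j : ℕ) + 1 < q := by
            have := (y j).isLt; omega
          exact Fin.ext (by simp [Nat.mod_eq_of_lt hlt, hsucc])
        · rw [Function.update_of_ne hj]
          exact (hagr j hj).symm
      show s(x, Function.update x i (⟨((x i : ℕ) + 1) % q, Nat.mod_lt _ hq0⟩ : Fin q)) = s(x,y)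
      rw [hyu]
    have hmem : s(a, b) ∈ (Ei q d S i).image (F i) := by
      rcases habs with h | h
      · exact key a b ha hb (fun j hj => (hagree j hj).symm) h
      · rw [Sym2.eq_swap]
        exact key b a hb ha (fun j hj => hagree j hj) h
    exact Finset.mem_biUnion.2 ⟨i, Finset.mem_univ i, hmem⟩
  calc (intE q d S).card ≤ (Finset.univ.biUnion (fun i => (Ei q d S i).image (F i))).card :=
        Finset.card_le_card hsub
    _ ≤ ∑ i : Fin d, ((Ei q d S i).image (F i)).card := Finset.card_biUnion_le
    _ ≤ ∑ i : Fin d, (Ei q d S i).card :=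
        Finset.sum_le_sum fun i _ => Finset.card_image_le

lemma claimB (q d : ℕ) (hq : 3 ≤ q) (S : Finset (Fin d → Fin q)) (i : Fin d) :
    (S.image fun a => Function.update a i (⟨0, by omega⟩ : Fin q)).card
      + (Ei q d S i).card ≤ S.card := by
  classical
  set z : Fin q := ⟨0, by omega⟩ with hz
  set P := S.image fun a => Function.update a i z with hP
  have hex : ∀ p : Fin d → Fin q, ∃ a, p ∈ P →
      a ∈ S ∧ Function.update a i z = p ∧
        ∀ b ∈ S, Function.update b i z = p → (b i : ℕ) ≤ (a i : ℕ) := by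
    intro p
    by_cases hp : p ∈ P
    · have hne : (S.filter fun a => Function.update a i z = p).Nonempty := by
        obtain ⟨a, ha, hap⟩ := Finset.mem_image.1 hp
        exact ⟨a, Finset.mem_filter.2 ⟨ha, hap⟩⟩
      obtain ⟨a, ha, hmax⟩ := Finset.exists_max_image _ (fun b => (b i : ℕ)) hne
      have ha' := Finset.mem_filter.1 ha
      exact ⟨a, fun _ => ⟨ha'.1, ha'.2, fun b hb hbp =>
        hmax b (Finset.mem_filter.2 ⟨hb, hbp⟩)⟩⟩
    · exact ⟨p, fun h => absurd h hp⟩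
  choose g hg using hex
  have hmem : ∀ p ∈ P, g p ∈ S \ Ei q d S i := by
    intro p hp
    obtain ⟨hgS, hgp, hgmax⟩ := hg p hp
    refine Finset.mem_sdiff.2 ⟨hgS, fun hE => ?_⟩
    rw [Ei, Finset.mem_filter] at hE
    obtain ⟨_, b, hbS, hagr, hsucc⟩ := hE
    have hbp : Function.update b i z = p := by
      rw [← hgp]
      funext j
      by_cases hj : j = i
      · subst hj; simp
      · rw [Function.update_of_ne hj, Function.update_of_ne hj]
        exact hagr j hj
    have := hgmax b hbS hbp
    omega
  have hinj : Set.InjOn g (P : Set (Fin d → Fin q)) := by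
    intro p hp p' hp' hgg
    have h1 := (hg p hp).2.1
    have h2 := (hg p' hp').2.1
    rw [← h1, ← h2, hgg]
  have hcard : P.card ≤ (S \ Ei q d S i).card :=
    Finset.card_le_card_of_injOn g hmem hinj
  have hEsub : Ei q d S i ⊆ S := Finset.filter_subset _ _
  rw [Finset.card_sdiff_of_subset hEsub] at hcard
  have hEle : (Ei q d S i).card ≤ S.card := Finset.card_le_card hEsub
  omega

set_option maxHeartbeats 1000000 in
/-- Bollobás' edge-isoperimetric inequality on the grid `{0,…,q−1}^d`:
`|Int_e(S)| ≤ max{ d·s·(1 − s^{−1/d}), d·q^d·(1 − 1/q)·(1 − (1 − s/q^d)^{1−1/d}) }`. -/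
theorem stmt_6 (q d : ℕ) (hq : 3 ≤ q) (hd : 2 ≤ d)
    (S : Finset (Fin d → Fin q)) (hS : S.Nonempty) :
    ((intE q d S).card : ℝ) ≤
      max ((d : ℝ) * (S.card : ℝ) * (1 - (S.card : ℝ) ^ (-(1 : ℝ) / (d : ℝ))))
        ((d : ℝ) * (q : ℝ) ^ (d : ℕ) * (1 - 1 / (q : ℝ)) *
          (1 - (1 - (S.card : ℝ) / (q : ℝ) ^ (d : ℕ)) ^ ((1 : ℝ) - 1 / (d : ℝ)))) := by
  classical
  refine le_trans ?_ (le_max_left _ _)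
  set z : Fin q := ⟨0, by omega⟩ with hz
  set L : Fin d → ℕ := fun i => (S.image fun a => Function.update a i z).card with hL
  have hd0 : (0 : ℝ) < (d : ℝ) := by positivity
  have hdne : (d : ℝ) ≠ 0 := ne_of_gt hd0
  have hs1 : (1 : ℝ) ≤ (S.card : ℝ) := by
    exact_mod_cast Finset.card_pos.2 hS
  have hs0 : (0 : ℝ) < (S.card : ℝ) := lt_of_lt_of_le one_pos hs1
  -- Loomis–Whitney
  have hLW : ((S.card : ℝ)) ^ (d - 1 : ℕ) ≤ ∏ i : Fin d, (L i : ℝ) := by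
    have := LW_aux (ι := Fin d) (α := Fin q) z Finset.univ S hS
      (fun a _ j hj => absurd (Finset.mem_univ j) hj)
    simpa [hL, Finset.card_univ] using this
  have hL1 : ∀ i, (1 : ℝ) ≤ (L i : ℝ) := by
    intro i
    exact_mod_cast Finset.card_pos.2 (hS.image _)
  have hL0 : ∀ i, (0 : ℝ) ≤ (L i : ℝ) := fun i => le_trans zero_le_one (hL1 i)
  -- AM-GM: d * s^(1-1/d) ≤ ∑ L
  have hrpow_eq : ((S.card : ℝ) ^ (d - 1 : ℕ)) ^ ((1 : ℝ) / (d : ℝ))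
      = (S.card : ℝ) ^ ((1 : ℝ) - 1 / (d : ℝ)) := by
    rw [← Real.rpow_natCast ((S.card : ℝ)) (d - 1), ← Real.rpow_mul (le_of_lt hs0)]
    congr 1
    rw [Nat.cast_sub (by omega : 1 ≤ d), Nat.cast_one]
    field_simp
  have hamgm : (d : ℝ) * (S.card : ℝ) ^ ((1 : ℝ) - 1 / (d : ℝ)) ≤ ∑ i : Fin d, (L i : ℝ) := by
    have hgm := Real.geom_mean_le_arith_mean_weighted Finset.univ (fun _ => 1 / (d : ℝ))
      (fun i : Fin d => (L i : ℝ)) (fun i _ => div_nonneg zero_le_one (le_of_lt hd0))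
      (by rw [Finset.sum_const, Finset.card_univ, Fintype.card_fin, nsmul_eq_mul,
        mul_one_div, div_self hdne]) (fun i _ => hL0 i)
    have hprod : (∏ i : Fin d, (L i : ℝ)) ^ ((1 : ℝ) / (d : ℝ))
        = ∏ i : Fin d, ((L i : ℝ)) ^ ((1 : ℝ) / (d : ℝ)) :=
      (Real.finset_prod_rpow _ _ (fun i _ => hL0 i) _).symm
    have h1 : (S.card : ℝ) ^ ((1 : ℝ) - 1 / (d : ℝ))
        ≤ (∏ i : Fin d, (L i : ℝ)) ^ ((1 : ℝ) / (d : ℝ)) := by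
      rw [← hrpow_eq]
      exact Real.rpow_le_rpow (pow_nonneg (le_of_lt hs0) _) hLW
        (div_nonneg zero_le_one (le_of_lt hd0))
    have h2 : (∏ i : Fin d, (L i : ℝ)) ^ ((1 : ℝ) / (d : ℝ))
        ≤ (1 / (d : ℝ)) * ∑ i : Fin d, (L i : ℝ) := by
      rw [hprod]
      refine hgm.trans (le_of_eq ?_)
      rw [Finset.mul_sum]
    have := h1.trans h2
    calc (d : ℝ) * (S.card : ℝ) ^ ((1 : ℝ) - 1 / (d : ℝ))
        ≤ (d : ℝ) * ((1 / (d : ℝ)) * ∑ i : Fin d, (L i : ℝ)) :=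
          mul_le_mul_of_nonneg_left this (le_of_lt hd0)
      _ = ∑ i : Fin d, (L i : ℝ) := by field_simp
  -- edge bound
  have hedge : ((intE q d S).card : ℝ) ≤ (d : ℝ) * (S.card : ℝ) - ∑ i : Fin d, (L i : ℝ) := by
    have h1 : ((intE q d S).card : ℝ) ≤ ∑ i : Fin d, ((Ei q d S i).card : ℝ) := by
      exact_mod_cast claimA q d hq S
    have h2 : ∀ i : Fin d, ((Ei q d S i).card : ℝ) ≤ (S.card : ℝ) - (L i : ℝ) := by
      intro i
      have := claimB q d hq S i
      rw [hL]
      have : (L i : ℕ) + (Ei q d S i).card ≤ S.card := this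
      push_cast
      have := (Nat.cast_le (α := ℝ)).2 this
      push_cast at this
      linarith
    calc ((intE q d S).card : ℝ) ≤ ∑ i : Fin d, ((Ei q d S i).card : ℝ) := h1
      _ ≤ ∑ i : Fin d, ((S.card : ℝ) - (L i : ℝ)) := Finset.sum_le_sum fun i _ => h2 i
      _ = (d : ℝ) * (S.card : ℝ) - ∑ i : Fin d, (L i : ℝ) := by
          rw [Finset.sum_sub_distrib, Finset.sum_const, Finset.card_univ]
          simp [nsmul_eq_mul, Fintype.card_fin]
  -- conclude
  have hfinal : (d : ℝ) * (S.card : ℝ) - ∑ i : Fin d, (L i : ℝ)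
      ≤ (d : ℝ) * (S.card : ℝ) * (1 - (S.card : ℝ) ^ (-(1 : ℝ) / (d : ℝ))) := by
    have hss : (S.card : ℝ) * (S.card : ℝ) ^ (-(1 : ℝ) / (d : ℝ))
        = (S.card : ℝ) ^ ((1 : ℝ) - 1 / (d : ℝ)) := by
      nth_rewrite 1 [← Real.rpow_one (S.card : ℝ)]
      rw [← Real.rpow_add hs0]
      congr 1
      ring
    have : (d : ℝ) * (S.card : ℝ) * (1 - (S.card : ℝ) ^ (-(1 : ℝ) / (d : ℝ)))
        = (d : ℝ) * (S.card : ℝ) - (d : ℝ) * (S.card : ℝ) ^ ((1 : ℝ) - 1 / (d : ℝ)) := by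
      rw [mul_sub, mul_one, mul_assoc, hss]
    rw [this]
    linarith [hamgm]
  linarith [hedge, hfinal]
end
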